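/- For each feasible cell $C\in\mathcal{F}_\varepsilon(Y)$ (a feasible composite cell of virtual width at least $\varepsilon$ overlapping a set $Y$), there exists an $\varepsilon$-minimal cell contained in $C$; and for each $\varepsilon$-minimal cell $C'$, there are at most $\lceil \log_2(1/\psi)\rceil$ cells $C\in\mathcal{F}_\varepsilon(Y)$ containing $C'$, where $\psi$ is the smallest side length of a feasible cell. Consequently $N_\varepsilon(Y) \le \lceil \log_2(1/\psi)\rceil \cdot N^{\min}_\varepsilon(Y)$, where $N_\varepsilon(Y)=|\mathcal{F}_\varepsilon(Y)|$ and $N^{\min}_\varepsilon(Y)$ is the minimum number of $\varepsilon$-minimal cells needed to cover $Y$. -/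

import Mathlib

private lemma chainAux {α : Type*} [PartialOrder α] [DecidableEq α] (s : α → ℝ) :
    ∀ n : ℕ, ∀ S : Finset α, S.card = n →
      IsChain (· ≤ ·) (S : Set α) →
      (∀ a ∈ S, ∀ b ∈ S, a < b → 2 * s a ≤ s b) →
      ∀ c : ℝ, 0 < c → (∀ a ∈ S, c ≤ s a) → S.Nonempty →
      ∃ M ∈ S, 2 ^ (n - 1) * c ≤ s M := by
  intro n
  induction n using Nat.strong_induction_on with
  | _ n ih =>
    intro S hcard hch hh c hc hlb hne
    obtain ⟨m, hmS, hmin⟩ := S.exists_minimal hne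
    set S' := S.erase m with hS'
    by_cases hS'e : S'.Nonempty
    · have hcard' : S'.card = n - 1 := by
        rw [hS', Finset.card_erase_of_mem hmS, hcard]
      have hn1 : n - 1 < n := by
        have : 0 < n := hcard ▸ Finset.card_pos.mpr hne
        omega
      have hlt : ∀ a ∈ S', m < a := by
        intro a haS'
        have haS : a ∈ S := Finset.mem_of_mem_erase haS'
        have hne' : a ≠ m := Finset.ne_of_mem_erase haS'
        have := hch (by exact_mod_cast haS) (by exact_mod_cast hmS) hne'
        rcases this with h | h
        · exact absurd (lt_of_le_of_ne h hne') (not_lt_of_ge (hmin haS h))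
        · exact lt_of_le_of_ne h hne'.symm
      have hlb' : ∀ a ∈ S', 2 * c ≤ s a := by
        intro a ha
        calc 2 * c ≤ 2 * s m := by nlinarith [hlb m hmS]
        _ ≤ s a := hh m hmS a (Finset.mem_of_mem_erase ha) (hlt a ha)
      have hch' : IsChain (· ≤ ·) (S' : Set α) :=
        hch.mono (by intro x hx; exact Finset.mem_of_mem_erase hx)
      obtain ⟨M, hMS', hM⟩ := ih (n - 1) hn1 S' hcard' hch'
        (fun a ha b hb hab => hh a (Finset.mem_of_mem_erase ha) b (Finset.mem_of_mem_erase hb) hab)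
        (2 * c) (by linarith) hlb' hS'e
      refine ⟨M, Finset.mem_of_mem_erase hMS', ?_⟩
      have hn2 : 1 ≤ n - 1 := by
        have := Finset.card_pos.mpr hS'e
        omega
      have hp : (2:ℝ) ^ (n - 1) = 2 * 2 ^ (n - 1 - 1) := by
        rw [← pow_succ']
        congr 1
        omega
      rw [hp]
      ring_nf
      ring_nf at hM
      linarith
    · have : S = {m} := by
        apply Finset.eq_singleton_iff_unique_mem.mpr
        refine ⟨hmS, fun x hx => ?_⟩
        by_contra hxm
        exact hS'e ⟨x, Finset.mem_erase.mpr ⟨hxm, hx⟩⟩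
      have hn : n = 1 := by rw [← hcard, this, Finset.card_singleton]
      refine ⟨m, hmS, ?_⟩
      simp only [hn]
      simpa using hlb m hmS

/-- In the hierarchy of feasible cells (ordered by containment, with side
lengths `s` halving along strict containments, all sides of cells of `Fε` in `[2ψ, 1]`,
and the cells containing any fixed cell forming a chain):
(a) each `C ∈ Fε ⊆ Fall` contains an `ε`-minimal cell (a minimal element of `Fall`);
(b) each `ε`-minimal cell is contained in at most `⌈log₂(1/ψ)⌉` cells of `Fε`;
consequently, if a family `Min` of `ε`-minimal cells covers `Fε` from below,
then `|Fε| ≤ ⌈log₂(1/ψ)⌉ · |Min|`. -/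
theorem stmt3 {α : Type*} [PartialOrder α] [DecidableEq α] [DecidableRel ((· ≤ ·) : α → α → Prop)] (s : α → ℝ) (ψ : ℝ)
    (hψ : 0 < ψ) (hψ1 : ψ ≤ 1)
    (Fall Fε : Finset α) (hsub : Fε ⊆ Fall)
    (hside : ∀ C ∈ Fε, 2 * ψ ≤ s C ∧ s C ≤ 1)
    (hhalf : ∀ C C' : α, C < C' → 2 * s C ≤ s C')
    (hchain : ∀ C' : α, IsChain (· ≤ ·) {C : α | C ∈ Fε ∧ C' ≤ C}) :
    (∀ C ∈ Fε, ∃ C' ∈ Fall, (∀ D ∈ Fall, D ≤ C' → D = C') ∧ C' ≤ C) ∧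
    (∀ C' ∈ Fall, (∀ D ∈ Fall, D ≤ C' → D = C') →
      ((Fε.filter (fun C => C' ≤ C)).card : ℝ) ≤ ⌈Real.logb 2 ψ⁻¹⌉₊) ∧
    (∀ Min : Finset α,
      (∀ C' ∈ Min, C' ∈ Fall ∧ ∀ D ∈ Fall, D ≤ C' → D = C') →
      (∀ C ∈ Fε, ∃ C' ∈ Min, C' ≤ C) →
      (Fε.card : ℝ) ≤ (⌈Real.logb 2 ψ⁻¹⌉₊ : ℝ) * Min.card) := by
  -- key bound (b)
  have key : ∀ C' : α, ((Fε.filter (fun C => C' ≤ C)).card : ℝ) ≤ ⌈Real.logb 2 ψ⁻¹⌉₊ := by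
    intro C'
    set S := Fε.filter (fun C => C' ≤ C) with hSdef
    by_cases hne : S.Nonempty
    · have hchS : IsChain (· ≤ ·) (S : Set α) := by
        have := hchain C'
        convert this using 1
        ext x
        simp [hSdef]
      have hh : ∀ a ∈ S, ∀ b ∈ S, a < b → 2 * s a ≤ s b := fun a _ b _ hab => hhalf a b hab
      have hlb : ∀ a ∈ S, 2 * ψ ≤ s a := fun a ha =>
        (hside a (Finset.mem_of_mem_filter a ha)).1
      obtain ⟨M, hMS, hM⟩ := chainAux s S.card S rfl hchS hh (2 * ψ) (by linarith) hlb hne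
      have hub : s M ≤ 1 := (hside M (Finset.mem_of_mem_filter M hMS)).2
      have hk1 : 1 ≤ S.card := Finset.card_pos.mpr hne
      have hpow : (2:ℝ) ^ S.card * ψ ≤ 1 := by
        have hp : (2:ℝ) ^ S.card = 2 * 2 ^ (S.card - 1) := by
          rw [← pow_succ']
          congr 1
          omega
        rw [hp]
        ring_nf
        ring_nf at hM
        linarith
      have h2k : (2:ℝ) ^ S.card ≤ ψ⁻¹ := by
        rw [← one_div]
        exact (le_div_iff₀ hψ).mpr hpow
      have hlog : (S.card : ℝ) ≤ Real.logb 2 ψ⁻¹ := by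
        have := Real.logb_le_logb_of_le (b := 2) (by norm_num) (by positivity) h2k
        rwa [Real.logb_pow, Real.logb_self_eq_one (by norm_num : (1:ℝ) < 2), mul_one] at this
      exact hlog.trans (Nat.le_ceil _)
    · rw [Finset.not_nonempty_iff_eq_empty] at hne
      simp [hne]
  refine ⟨?_, fun C' _ _ => key C', ?_⟩
  · intro C hC
    have hCall : C ∈ Fall := hsub hC
    obtain ⟨m, hm, hmin⟩ := (Fall.filter (· ≤ C)).exists_minimal
      ⟨C, Finset.mem_filter.mpr ⟨hCall, le_refl C⟩⟩
    rw [Finset.mem_filter] at hm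
    refine ⟨m, hm.1, fun D hD hDm => ?_, hm.2⟩
    by_contra hne
    exact hne (le_antisymm hDm (hmin (Finset.mem_filter.mpr ⟨hD, hDm.trans hm.2⟩) hDm))
  · intro Min _ hcov
    have hsub2 : Fε ⊆ Min.biUnion (fun C' => Fε.filter (fun C => C' ≤ C)) := by
      intro C hC
      obtain ⟨C', hC', hle⟩ := hcov C hC
      exact Finset.mem_biUnion.mpr ⟨C', hC', Finset.mem_filter.mpr ⟨hC, hle⟩⟩
    calc (Fε.card : ℝ) ≤ ((Min.biUnion (fun C' => Fε.filter (fun C => C' ≤ C))).card : ℝ) := by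
          exact_mod_cast Finset.card_le_card hsub2
      _ ≤ ∑ C' ∈ Min, ((Fε.filter (fun C => C' ≤ C)).card : ℝ) := by
          exact_mod_cast Finset.card_biUnion_le
      _ ≤ ∑ _C' ∈ Min, (⌈Real.logb 2 ψ⁻¹⌉₊ : ℝ) := Finset.sum_le_sum (fun C' _ => key C')
      _ = (⌈Real.logb 2 ψ⁻¹⌉₊ : ℝ) * Min.card := by
          rw [Finset.sum_const, nsmul_eq_mul, mul_comm]
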